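/- arXiv:2308.02293 — 2 statements merged into one kernel-verified Lean document; each statement's English description precedes it below -/
import Mathlib

section
/- For any vector r ∈ ℝⁿ and any 1 ≤ h ≤ n, the minimum over ξ ∈ ℝⁿ of (1/n)‖r − ξ‖₂² + T_h(ξ) equals (1/2)T_h(r), where T_h(ξ) = (1/n)·(sum of the h smallest values among ξ₁², ..., ξₙ²). -/
open Finset

/-- The h-trimmed squared loss: (1/n) times the sum of the h smallest squared entries,
expressed as the infimum over index sets of cardinality h. -/
noncomputable def trimmedLoss (n h : ℕ) (ξ : Fin n → ℝ) : ℝ :=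
  (1 / (n : ℝ)) *
    sInf ((fun I : Finset (Fin n) => ∑ i ∈ I, (ξ i) ^ 2) '' {I | I.card = h})

theorem ttl_identity (n h : ℕ) (hn : 0 < n) (hh1 : 1 ≤ h) (hhn : h ≤ n)
    (r : Fin n → ℝ) :
    IsLeast
      (Set.range fun ξ : Fin n → ℝ =>
        (1 / (n : ℝ)) * ∑ i, (r i - ξ i) ^ 2 + trimmedLoss n h ξ)
      ((1 / 2) * trimmedLoss n h r) := by
  set S : (Fin n → ℝ) → Set ℝ :=
    fun ξ => (fun I : Finset (Fin n) => ∑ i ∈ I, (ξ i) ^ 2) '' {I | I.card = h} with hS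
  have hfin : ∀ ξ : Fin n → ℝ, (S ξ).Finite := fun ξ =>
    Set.Finite.image _ (Set.toFinite _)
  obtain ⟨I₁, -, hI₁card⟩ :=
    Finset.exists_subset_card_eq (s := (Finset.univ : Finset (Fin n))) (n := h)
      (by simpa using hhn)
  have hne : ∀ ξ : Fin n → ℝ, (S ξ).Nonempty := fun ξ => ⟨_, ⟨I₁, hI₁card, rfl⟩⟩
  have hbdd : ∀ ξ : Fin n → ℝ, BddBelow (S ξ) := fun ξ => (hfin ξ).bddBelow
  have hnpos : (0 : ℝ) < n := by exact_mod_cast hn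
  -- minimizer for r
  have hTL : ∀ ξ : Fin n → ℝ, trimmedLoss n h ξ = 1 / (n : ℝ) * sInf (S ξ) :=
    fun ξ => rfl
  obtain ⟨I₀, hI₀card, hI₀⟩ := (hne r).csInf_mem (hfin r)
  have hI₀card : I₀.card = h := hI₀card
  have hI₀' : ∑ i ∈ I₀, (r i) ^ 2 = sInf (S r) := hI₀
  have hInf_le : ∀ I : Finset (Fin n), I.card = h →
      sInf (S r) ≤ ∑ i ∈ I, (r i) ^ 2 := fun I hI =>
    csInf_le (hbdd r) ⟨I, hI, rfl⟩
  constructor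
  · -- membership: use ξ = r/2 on I₀, r elsewhere
    refine ⟨fun i => if i ∈ I₀ then r i / 2 else r i, ?_⟩
    have hsum1 : ∑ i, (r i - (if i ∈ I₀ then r i / 2 else r i)) ^ 2
        = (1/4) * ∑ i ∈ I₀, (r i) ^ 2 := by
      rw [Finset.mul_sum]
      rw [show (∑ i, (r i - (if i ∈ I₀ then r i / 2 else r i)) ^ 2)
          = ∑ i, (if i ∈ I₀ then (1/4) * (r i)^2 else 0) from
        Finset.sum_congr rfl (fun i _ => by split <;> ring)]
      rw [Finset.sum_ite_mem, Finset.univ_inter]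
    have hsum2 : sInf (S (fun i => if i ∈ I₀ then r i / 2 else r i))
        = (1/4) * ∑ i ∈ I₀, (r i) ^ 2 := by
      apply le_antisymm
      · have : (∑ i ∈ I₀, (if i ∈ I₀ then r i / 2 else r i) ^ 2)
            = (1/4) * ∑ i ∈ I₀, (r i) ^ 2 := by
          rw [Finset.mul_sum]
          exact Finset.sum_congr rfl (fun i hi => by rw [if_pos hi]; ring
            )
        calc sInf (S _) ≤ _ := csInf_le (hbdd _) ⟨I₀, hI₀card, rfl⟩
          _ = (1/4) * ∑ i ∈ I₀, (r i) ^ 2 := this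
      · apply le_csInf (hne _)
        rintro b ⟨I, hI, rfl⟩
        have h1 : (1/4) * ∑ i ∈ I, (r i) ^ 2
            ≤ ∑ i ∈ I, (if i ∈ I₀ then r i / 2 else r i) ^ 2 := by
          rw [Finset.mul_sum]
          apply Finset.sum_le_sum
          intro i _
          split <;> nlinarith [sq_nonneg (r i)]
        have h2 : sInf (S r) ≤ ∑ i ∈ I, (r i) ^ 2 := hInf_le I hI
        rw [← hI₀'] at h2
        simp only
        linarith
    show 1 / (n:ℝ) * ∑ i, (r i - (if i ∈ I₀ then r i / 2 else r i)) ^ 2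
        + trimmedLoss n h (fun i => if i ∈ I₀ then r i / 2 else r i)
        = 1 / 2 * trimmedLoss n h r
    rw [hTL, hTL, hsum1, hsum2, ← hI₀']
    ring
  · -- lower bound
    rintro x ⟨ξ, rfl⟩
    obtain ⟨J, hJcard, hJ⟩ := (hne ξ).csInf_mem (hfin ξ)
    have hJcard : J.card = h := hJcard
    have hJ' : ∑ i ∈ J, (ξ i) ^ 2 = sInf (S ξ) := hJ
    show 1 / 2 * trimmedLoss n h r
        ≤ 1 / (n:ℝ) * ∑ i, (r i - ξ i) ^ 2 + trimmedLoss n h ξ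
    rw [hTL, hTL, ← hJ']
    have step1 : ∑ i ∈ J, (r i - ξ i) ^ 2 ≤ ∑ i, (r i - ξ i) ^ 2 :=
      Finset.sum_le_sum_of_subset_of_nonneg (Finset.subset_univ J)
        (fun i _ _ => sq_nonneg _)
    have step2 : (1/2) * ∑ i ∈ J, (r i) ^ 2
        ≤ ∑ i ∈ J, (r i - ξ i) ^ 2 + ∑ i ∈ J, (ξ i) ^ 2 := by
      rw [Finset.mul_sum, ← Finset.sum_add_distrib]
      apply Finset.sum_le_sum
      intro i _
      nlinarith [sq_nonneg (r i - 2 * ξ i)]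
    have step3 : sInf (S r) ≤ ∑ i ∈ J, (r i) ^ 2 := hInf_le J hJcard
    have hinv : (0:ℝ) < 1 / (n:ℝ) := by positivity
    calc (1/2) * (1 / (n:ℝ) * sInf (S r))
        ≤ (1/2) * (1 / (n:ℝ) * ∑ i ∈ J, (r i) ^ 2) := by
          apply mul_le_mul_of_nonneg_left (mul_le_mul_of_nonneg_left step3 hinv.le) (by norm_num)
      _ = (1 / (n:ℝ)) * ((1/2) * ∑ i ∈ J, (r i) ^ 2) := by ring
      _ ≤ (1 / (n:ℝ)) * (∑ i ∈ J, (r i - ξ i) ^ 2 + ∑ i ∈ J, (ξ i) ^ 2) :=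
          mul_le_mul_of_nonneg_left step2 hinv.le
      _ ≤ (1 / (n:ℝ)) * (∑ i, (r i - ξ i) ^ 2 + ∑ i ∈ J, (ξ i) ^ 2) := by
          apply mul_le_mul_of_nonneg_left (by linarith) hinv.le
      _ = 1 / (n:ℝ) * ∑ i, (r i - ξ i) ^ 2 + 1 / (n:ℝ) * ∑ i ∈ J, (ξ i) ^ 2 := by ring
end

section
/- Let Z = {(xᵢ,yᵢ)}_{i=1}^n be a dataset, let f_θ be a family of models, C ≥ 0 a regularizer on models with C(f_θ) well-defined, λ > 0, and define the objective L_Z̃(θ) = (1/2)T_h(r_Z̃(θ)) + λ C(f_θ) for a dataset Z̃, where r_Z̃(θ) is the residual vector and T_h the h-trimmed loss. Fix θ₀ and set M₀ = (1/(2n))∑_{i=1}^n (yᵢ − f_{θ₀}(xᵢ))² + λC(f_{θ₀}). Then for any contaminated dataset Z̃ obtained by replacing at most m ≤ n − h samples of Z with arbitrary values, any minimizer θ̂ of L_Z̃ satisfies C(f_{θ̂}) ≤ M₀/λ. In particular, the supremum of C(f_{θ̂(Z̃)}) over all such contaminations with m ≤ n−h is finite, so the functional breakdown point of the minimizer is at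 least (n−h+1)/n. -/
open Finset

lemma trimmedLoss_nonneg (n h : ℕ) (ξ : Fin n → ℝ) : 0 ≤ trimmedLoss n h ξ := by
  unfold trimmedLoss
  apply mul_nonneg (by positivity)
  apply Real.sInf_nonneg
  rintro r ⟨I, -, rfl⟩
  exact Finset.sum_nonneg fun i _ => sq_nonneg _

lemma trimmedLoss_le (n h : ℕ) (hn : 0 < n) (ξ : Fin n → ℝ) (I : Finset (Fin n))
    (hI : I.card = h) : trimmedLoss n h ξ ≤ (1 / (n : ℝ)) * ∑ i ∈ I, (ξ i) ^ 2 := by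
  unfold trimmedLoss
  apply mul_le_mul_of_nonneg_left _ (by positivity)
  apply csInf_le
  · exact ⟨0, by rintro r ⟨J, -, rfl⟩; exact Finset.sum_nonneg fun i _ => sq_nonneg _⟩
  · exact ⟨I, hI, rfl⟩

/-- Functional breakdown bound: a minimizer of the HOV-regularized trimmed loss on a dataset
contaminated in at most `n - h` places has regularizer value at most `M₀ / λ`. -/
theorem breakdown_bound {X Θ : Type*} (n h : ℕ) (hn : 0 < n) (hh1 : 1 ≤ h) (hhn : h ≤ n)
    (x : Fin n → X) (y : Fin n → ℝ) (f : Θ → X → ℝ)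
    (C : Θ → ℝ) (hC : ∀ θ, 0 ≤ C θ)
    (lam : ℝ) (hlam : 0 < lam) (θ₀ : Θ)
    (x' : Fin n → X) (y' : Fin n → ℝ)
    (hrepl : {i : Fin n | ¬(x' i = x i ∧ y' i = y i)}.ncard ≤ n - h)
    (θhat : Θ)
    (hmin : ∀ θ : Θ,
      (1 / 2) * trimmedLoss n h (fun i => y' i - f θhat (x' i)) + lam * C θhat ≤
        (1 / 2) * trimmedLoss n h (fun i => y' i - f θ (x' i)) + lam * C θ) :
    C θhat ≤
      ((1 / (2 * (n : ℝ))) * ∑ i, (y i - f θ₀ (x i)) ^ 2 + lam * C θ₀) / lam := by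
  classical
  set G : Finset (Fin n) := univ.filter (fun i => x' i = x i ∧ y' i = y i) with hG
  have hcompl : {i : Fin n | ¬(x' i = x i ∧ y' i = y i)}.ncard
      = (univ.filter (fun i => ¬(x' i = x i ∧ y' i = y i))).card := by
    rw [← Set.ncard_coe_finset]
    congr 1
    ext i
    simp
  have hsplit := Finset.card_filter_add_card_filter_not
    (s := (univ : Finset (Fin n))) (p := fun i => x' i = x i ∧ y' i = y i)
  have hGcard : h ≤ G.card := by
    rw [hcompl] at hrepl
    simp only [Finset.card_univ, Fintype.card_fin] at hsplit
    have hbeta : (univ.filter (fun a => ¬ (fun i => x' i = x i ∧ y' i = y i) a)).card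
        = (univ.filter (fun i => ¬(x' i = x i ∧ y' i = y i))).card := rfl
    rw [hbeta] at hsplit
    rw [hG]
    omega
  obtain ⟨I, hIG, hIcard⟩ := Finset.exists_subset_card_eq hGcard
  -- sum over I of contaminated residuals at θ₀ equals clean residuals
  have hsum : ∑ i ∈ I, (y' i - f θ₀ (x' i)) ^ 2 = ∑ i ∈ I, (y i - f θ₀ (x i)) ^ 2 := by
    apply Finset.sum_congr rfl
    intro i hi
    have := hIG hi
    rw [hG, Finset.mem_filter] at this
    rw [this.2.1, this.2.2]
  have hsum_le : ∑ i ∈ I, (y i - f θ₀ (x i)) ^ 2 ≤ ∑ i, (y i - f θ₀ (x i)) ^ 2 :=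
    Finset.sum_le_sum_of_subset_of_nonneg (Finset.subset_univ I)
      (fun i _ _ => sq_nonneg _)
  have hTL : trimmedLoss n h (fun i => y' i - f θ₀ (x' i))
      ≤ (1 / (n : ℝ)) * ∑ i, (y i - f θ₀ (x i)) ^ 2 := by
    calc trimmedLoss n h (fun i => y' i - f θ₀ (x' i))
        ≤ (1 / (n : ℝ)) * ∑ i ∈ I, (y' i - f θ₀ (x' i)) ^ 2 :=
          trimmedLoss_le n h hn _ I hIcard
      _ = (1 / (n : ℝ)) * ∑ i ∈ I, (y i - f θ₀ (x i)) ^ 2 := by rw [hsum]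
      _ ≤ (1 / (n : ℝ)) * ∑ i, (y i - f θ₀ (x i)) ^ 2 := by
          apply mul_le_mul_of_nonneg_left hsum_le (by positivity)
  have key : lam * C θhat ≤
      (1 / (2 * (n : ℝ))) * ∑ i, (y i - f θ₀ (x i)) ^ 2 + lam * C θ₀ := by
    have h1 : lam * C θhat ≤
        (1 / 2) * trimmedLoss n h (fun i => y' i - f θhat (x' i)) + lam * C θhat := by
      have := trimmedLoss_nonneg n h (fun i => y' i - f θhat (x' i))
      linarith
    have h2 := hmin θ₀
    have h3 : (1 / 2) * trimmedLoss n h (fun i => y' i - f θ₀ (x' i))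
        ≤ (1 / (2 * (n : ℝ))) * ∑ i, (y i - f θ₀ (x i)) ^ 2 := by
      have hn' : (0:ℝ) < n := by exact_mod_cast hn
      calc (1 / 2) * trimmedLoss n h (fun i => y' i - f θ₀ (x' i))
          ≤ (1 / 2) * ((1 / (n : ℝ)) * ∑ i, (y i - f θ₀ (x i)) ^ 2) := by
            apply mul_le_mul_of_nonneg_left hTL (by norm_num)
        _ = (1 / (2 * (n : ℝ))) * ∑ i, (y i - f θ₀ (x i)) ^ 2 := by ring
    linarith
  rw [le_div_iff₀ hlam, mul_comm]
  exact key
end
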